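/- arXiv:2508.12607 — 2 statements merged into one kernel-verified Lean document; each statement's English description precedes it below -/
import Mathlib

section
/- Let K be a field, m ≥ 2 an integer, G a finite simple graph on [n] and v an internal vertex of G. Then the sequence of S-modules 0 → S/J_{K_m,G} → S/J_{K_m,G_v} ⊕ S/(P_v + J_{K_m,G∖v}) → S/(P_v + J_{K_m,G_v∖v}) → 0 is exact, where the first map sends the class of f to the pair of classes of f, and the second map sends a pair of classes of (f,g) to the class of f − g. -/
/-- A maximal clique of a simple graph: a clique that is maximal under inclusion. -/
def MaxClq {V : Type*} (G : SimpleGraph V) (s : Set V) : Prop :=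
  G.IsClique s ∧ ∀ t : Set V, G.IsClique t → s ⊆ t → s = t

/-- An internal vertex: a vertex lying in at least two (distinct) maximal cliques. -/
def InternalVtx {V : Type*} (G : SimpleGraph V) (v : V) : Prop :=
  ∃ s t : Set V, MaxClq G s ∧ MaxClq G t ∧ s ≠ t ∧ v ∈ s ∧ v ∈ t

/-- `iv G`: the number of internal vertices of `G`. -/
noncomputable def ivNum {V : Type*} (G : SimpleGraph V) : ℕ :=
  {v : V | InternalVtx G v}.ncard

/-- `c G`: the number of connected components of `G`. -/
noncomputable def compNum {V : Type*} (G : SimpleGraph V) : ℕ :=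
  Nat.card G.ConnectedComponent

/-- `𝒞 G`: the number of maximal cliques of `G`. -/
noncomputable def maxClqNum {V : Type*} (G : SimpleGraph V) : ℕ :=
  {s : Set V | MaxClq G s}.ncard

/-- `ω G`: the clique number of `G`, the maximum size of a clique. -/
noncomputable def clqNum {V : Type*} (G : SimpleGraph V) : ℕ :=
  sSup {k : ℕ | ∃ s : Set V, G.IsClique s ∧ s.ncard = k}

/-- A set of edges of `G` is clique-disjoint if no two distinct edges of it are both
contained in a single clique of `G`. -/
def CliqueDisjointEdges {V : Type*} (G : SimpleGraph V) (E : Set (Sym2 V)) : Prop :=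
  E ⊆ G.edgeSet ∧ ∀ e ∈ E, ∀ f ∈ E, e ≠ f →
    ¬ ∃ s : Set V, G.IsClique s ∧ (∀ x ∈ e, x ∈ s) ∧ (∀ x ∈ f, x ∈ s)

/-- `η G`: the maximum cardinality of a clique-disjoint set of edges of `G`. -/
noncomputable def etaNum {V : Type*} (G : SimpleGraph V) : ℕ :=
  sSup {k : ℕ | ∃ E : Set (Sym2 V), CliqueDisjointEdges G E ∧ E.ncard = k}

/-- `G_v`: the graph on the same vertex set as `G` whose edges are those of `G` together
with all edges between distinct neighbours of `v`. -/
def addNbrEdges {V : Type*} (G : SimpleGraph V) (v : V) : SimpleGraph V where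
  Adj a b := G.Adj a b ∨ (a ≠ b ∧ G.Adj v a ∧ G.Adj v b)
  symm := by
    refine ⟨?_⟩
    intro a b h
    rcases h with h | ⟨hne, h1, h2⟩
    · exact Or.inl h.symm
    · exact Or.inr ⟨hne.symm, h2, h1⟩
  loopless := by
    refine ⟨?_⟩
    intro a h
    rcases h with h | ⟨hne, _, _⟩
    · exact G.irrefl h
    · exact hne rfl

/-- The graph `G ∖ v`: the vertex `v` is isolated and the remaining edges are exactly
those of the induced subgraph of `G` on the complement of `v`, so that the binomial
edge ideal generators of `G ∖ v` are exactly those coming from edges of `G` avoiding `v`. -/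
def delVtx {V : Type*} (G : SimpleGraph V) (v : V) : SimpleGraph V where
  Adj a b := G.Adj a b ∧ a ≠ v ∧ b ≠ v
  symm := by
    refine ⟨?_⟩
    rintro a b ⟨h, ha, hb⟩
    exact ⟨h.symm, hb, ha⟩
  loopless := by
    refine ⟨?_⟩
    rintro a ⟨h, _, _⟩
    exact G.irrefl h

open MvPolynomial in
/-- The generalized binomial edge ideal `J_{K_m, G}` of a graph `G` on `[n]`, inside
`S = K[x_{ij} : i ∈ [m], j ∈ [n]]`: it is generated by the `2`-minors
`x_{ik} x_{jl} − x_{il} x_{jk}` for `1 ≤ i < j ≤ m` and `{k, l} ∈ E(G)`. -/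
noncomputable def genBEI (K : Type*) [Field K] (m n : ℕ) (G : SimpleGraph (Fin n)) :
    Ideal (MvPolynomial (Fin m × Fin n) K) :=
  Ideal.span {f | ∃ (i j : Fin m) (k l : Fin n), i < j ∧ G.Adj k l ∧
    f = X (i, k) * X (j, l) - X (i, l) * X (j, k)}

open MvPolynomial in
/-- `P_v = (x_{1v}, …, x_{mv})`. -/
noncomputable def Pvert (K : Type*) [Field K] (m n : ℕ) (v : Fin n) :
    Ideal (MvPolynomial (Fin m × Fin n) K) :=
  Ideal.span (Set.range fun i : Fin m => X (i, v))

theorem genBEI_mono (K : Type*) [Field K] (m n : ℕ) {G H : SimpleGraph (Fin n)}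
    (h : ∀ a b : Fin n, G.Adj a b → H.Adj a b) :
    genBEI K m n G ≤ genBEI K m n H :=
  Ideal.span_mono (by
    rintro f ⟨i, j, k, l, hij, hkl, rfl⟩
    exact ⟨i, j, k, l, hij, h _ _ hkl, rfl⟩)

open MvPolynomial in
theorem genBEI_le_sup (K : Type*) [Field K] (m n : ℕ) (H : SimpleGraph (Fin n))
    (v : Fin n) :
    genBEI K m n H ≤ Pvert K m n v + genBEI K m n (delVtx H v) := by
  refine Ideal.span_le.mpr ?_
  rintro f ⟨i, j, k, l, hij, hkl, rfl⟩
  rw [Submodule.add_eq_sup]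
  by_cases hk : k = v
  · subst hk
    refine Ideal.mem_sup_left (Ideal.sub_mem _ ?_ ?_)
    · exact Ideal.mul_mem_right _ _ (Ideal.subset_span ⟨i, rfl⟩)
    · exact Ideal.mul_mem_left _ _ (Ideal.subset_span ⟨j, rfl⟩)
  · by_cases hl : l = v
    · subst hl
      refine Ideal.mem_sup_left (Ideal.sub_mem _ ?_ ?_)
      · exact Ideal.mul_mem_left _ _ (Ideal.subset_span ⟨j, rfl⟩)
      · exact Ideal.mul_mem_right _ _ (Ideal.subset_span ⟨i, rfl⟩)
    · exact Ideal.mem_sup_right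
        (Ideal.subset_span ⟨i, j, k, l, hij, ⟨hkl, hk, hl⟩, rfl⟩)

theorem sup_le_sup_gv (K : Type*) [Field K] (m n : ℕ) (G : SimpleGraph (Fin n))
    (v : Fin n) :
    Pvert K m n v + genBEI K m n (delVtx G v) ≤
      Pvert K m n v + genBEI K m n (delVtx (addNbrEdges G v) v) := by
  rw [Submodule.add_eq_sup, Submodule.add_eq_sup]
  exact sup_le_sup_left
    (genBEI_mono K m n (G := delVtx G v) (H := delVtx (addNbrEdges G v) v)
      (fun a b h => ⟨Or.inl h.1, h.2.1, h.2.2⟩)) _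

/-- The map `S/J_{K_m,G} → S/J_{K_m,G_v} ⊕ S/(P_v + J_{K_m,G∖v})` sending the class of
`f` to the pair of classes of `f`. -/
noncomputable def firstMap (K : Type*) [Field K] (m n : ℕ) (G : SimpleGraph (Fin n))
    (v : Fin n) :
    (MvPolynomial (Fin m × Fin n) K ⧸ genBEI K m n G) →ₗ[MvPolynomial (Fin m × Fin n) K]
      (MvPolynomial (Fin m × Fin n) K ⧸ genBEI K m n (addNbrEdges G v)) ×
      (MvPolynomial (Fin m × Fin n) K ⧸ (Pvert K m n v + genBEI K m n (delVtx G v))) :=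
  LinearMap.prod
    (Submodule.mapQ _ _ LinearMap.id
      (fun x hx => genBEI_mono K m n (fun _ _ h => Or.inl h) hx))
    (Submodule.mapQ _ _ LinearMap.id
      (fun x hx => genBEI_le_sup K m n G v hx))

/-- The map `S/J_{K_m,G_v} ⊕ S/(P_v + J_{K_m,G∖v}) → S/(P_v + J_{K_m,G_v∖v})` sending a
pair of classes of `(f, g)` to the class of `f − g`. -/
noncomputable def secondMap (K : Type*) [Field K] (m n : ℕ) (G : SimpleGraph (Fin n))
    (v : Fin n) :
    ((MvPolynomial (Fin m × Fin n) K ⧸ genBEI K m n (addNbrEdges G v)) ×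
      (MvPolynomial (Fin m × Fin n) K ⧸ (Pvert K m n v + genBEI K m n (delVtx G v))))
      →ₗ[MvPolynomial (Fin m × Fin n) K]
      (MvPolynomial (Fin m × Fin n) K ⧸
        (Pvert K m n v + genBEI K m n (delVtx (addNbrEdges G v) v))) :=
  (Submodule.mapQ (genBEI K m n (addNbrEdges G v))
      (Pvert K m n v + genBEI K m n (delVtx (addNbrEdges G v) v)) LinearMap.id
      (fun x hx => genBEI_le_sup K m n (addNbrEdges G v) v hx)).comp
    (LinearMap.fst _ _ _) -
  (Submodule.mapQ (Pvert K m n v + genBEI K m n (delVtx G v))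
      (Pvert K m n v + genBEI K m n (delVtx (addNbrEdges G v) v)) LinearMap.id
      (fun x hx => sup_le_sup_gv K m n G v hx)).comp
    (LinearMap.snd _ _ _)
open MvPolynomial

section Aux

variable (K : Type*) [Field K] (m n : ℕ)

/-- Minor membership for any pair of distinct rows. -/
lemma minor_mem {G : SimpleGraph (Fin n)} {i j : Fin m} {k l : Fin n}
    (hij : i ≠ j) (h : G.Adj k l) :
    X (i, k) * X (j, l) - X (i, l) * X (j, k) ∈ genBEI K m n G := by
  rcases lt_or_gt_of_ne hij with h1 | h1
  · exact Ideal.subset_span ⟨i, j, k, l, h1, h, rfl⟩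
  · have h2 : X (j, l) * X (i, k) - X (j, k) * X (i, l) ∈ genBEI K m n G :=
      Ideal.subset_span ⟨j, i, l, k, h1, h.symm, rfl⟩
    have e : (X (i, k) * X (j, l) - X (i, l) * X (j, k) : MvPolynomial (Fin m × Fin n) K)
        = X (j, l) * X (i, k) - X (j, k) * X (i, l) := by ring
    rw [e]; exact h2

/-- Key identity: `x_{kv} f^{ij}_{uw} ∈ J_G` for `u, w` neighbours of `v`. -/
lemma xv_mul_minor_mem {G : SimpleGraph (Fin n)} {v : Fin n} {i j k : Fin m}
    {u w : Fin n} (hij : i ≠ j) (hu : G.Adj v u) (hw : G.Adj v w) :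
    X (k, v) * (X (i, u) * X (j, w) - X (i, w) * X (j, u)) ∈ genBEI K m n G := by
  by_cases hki : k = i
  · subst hki
    have e : (X (k, v) : MvPolynomial (Fin m × Fin n) K) * (X (k, u) * X (j, w) - X (k, w) * X (j, u))
        = X (k, u) * (X (k, v) * X (j, w) - X (k, w) * X (j, v))
          + X (k, w) * (X (k, u) * X (j, v) - X (k, v) * X (j, u)) := by ring
    rw [e]
    exact add_mem (Ideal.mul_mem_left _ _ (minor_mem K m n hij hw))
      (Ideal.mul_mem_left _ _ (minor_mem K m n hij hu.symm))
  · by_cases hkj : k = j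
    · subst hkj
      have e : (X (k, v) : MvPolynomial (Fin m × Fin n) K) * (X (i, u) * X (k, w) - X (i, w) * X (k, u))
          = X (k, u) * (X (i, v) * X (k, w) - X (i, w) * X (k, v))
            + X (k, w) * (X (i, u) * X (k, v) - X (i, v) * X (k, u)) := by ring
      rw [e]
      exact add_mem (Ideal.mul_mem_left _ _ (minor_mem K m n hij hw))
        (Ideal.mul_mem_left _ _ (minor_mem K m n hij hu.symm))
    · have e : (X (k, v) : MvPolynomial (Fin m × Fin n) K) * (X (i, u) * X (j, w) - X (i, w) * X (j, u))
          = X (k, w) * (X (i, u) * X (j, v) - X (i, v) * X (j, u))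
            - X (i, u) * (X (j, v) * X (k, w) - X (j, w) * X (k, v))
            + X (j, u) * (X (i, v) * X (k, w) - X (i, w) * X (k, v)) := by ring
      rw [e]
      refine add_mem (sub_mem ?_ ?_) ?_
      · exact Ideal.mul_mem_left _ _ (minor_mem K m n hij hu.symm)
      · exact Ideal.mul_mem_left _ _
          (minor_mem K m n (fun h => hkj h.symm) hw)
      · exact Ideal.mul_mem_left _ _
          (minor_mem K m n (fun h => hki h.symm) hw)

variable (v : Fin n)

/-- The substitution `x_{kv} ↦ 0`. -/
noncomputable def subV : MvPolynomial (Fin m × Fin n) K →ₐ[K] MvPolynomial (Fin m × Fin n) K :=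
  aeval (fun p : Fin m × Fin n => if p.2 = v then 0 else X p)

lemma subV_X (i : Fin m) (k : Fin n) :
    subV K m n v (X (i, k)) = if k = v then 0 else X (i, k) := by
  simp [subV]

lemma sub_subV_mem_Pvert (c : MvPolynomial (Fin m × Fin n) K) :
    c - subV K m n v c ∈ Pvert K m n v := by
  induction c using MvPolynomial.induction_on with
  | C a => simp [subV]
  | add p q hp hq =>
    have e : p + q - subV K m n v (p + q)
        = (p - subV K m n v p) + (q - subV K m n v q) := by
      rw [map_add]; ring
    rw [e]; exact add_mem hp hq
  | mul_X p s hp =>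
    rw [map_mul]
    rcases s with ⟨i, k⟩
    by_cases hk : k = v
    · subst hk
      rw [subV_X, if_pos rfl, mul_zero, sub_zero]
      have hX : X (i, k) ∈ Pvert K m n k := Ideal.subset_span ⟨i, rfl⟩
      exact Ideal.mul_mem_left _ _ hX
    · rw [subV_X, if_neg hk]
      have e : p * X (i, k) - subV K m n v p * X (i, k)
          = (p - subV K m n v p) * X (i, k) := by ring
      rw [e]; exact Ideal.mul_mem_right _ _ hp

/-- `P_v · J_{K_m, G_v ∖ v} ⊆ J_{K_m, G}`. -/
lemma Pvert_mul_le (G : SimpleGraph (Fin n)) :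
    Pvert K m n v * genBEI K m n (delVtx (addNbrEdges G v) v) ≤ genBEI K m n G := by
  rw [Pvert, genBEI, Ideal.span_mul_span']
  refine Ideal.span_le.mpr ?_
  intro x hx
  rw [Set.mem_mul] at hx
  obtain ⟨p, ⟨i, rfl⟩, q, ⟨a, b, k, l, hab, ⟨hadj, hk, hl⟩, rfl⟩, rfl⟩ := hx
  rcases hadj with hG | ⟨hne, hvk, hvl⟩
  · exact Ideal.mul_mem_left _ _ (Ideal.subset_span ⟨a, b, k, l, hab, hG, rfl⟩)
  · exact xv_mul_minor_mem K m n (ne_of_lt hab) hvk hvl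

/-- `subV` maps `J_{K_m, G_v}` into `J_{K_m, G_v ∖ v}`. -/
lemma subV_genBEI_mem (G : SimpleGraph (Fin n)) {h : MvPolynomial (Fin m × Fin n) K}
    (hh : h ∈ genBEI K m n (addNbrEdges G v)) :
    subV K m n v h ∈ genBEI K m n (delVtx (addNbrEdges G v) v) := by
  have hmap : (genBEI K m n (addNbrEdges G v)).map (subV K m n v).toRingHom
      ≤ genBEI K m n (delVtx (addNbrEdges G v) v) := by
    rw [genBEI, Ideal.map_span]
    refine Ideal.span_le.mpr ?_
    rintro x ⟨f, ⟨i, j, k, l, hij, hadj, rfl⟩, rfl⟩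
    simp only [AlgHom.toRingHom_eq_coe, RingHom.coe_coe, map_sub, map_mul, subV_X]
    by_cases hk : k = v
    · have hl : l ≠ v := fun h => (addNbrEdges G v).loopless.irrefl k ((hk.trans h.symm) ▸ hadj)
      simp [hk, hl]
    · by_cases hl : l = v
      · simp [hk, hl]
      · simp only [if_neg hk, if_neg hl]
        exact Ideal.subset_span ⟨i, j, k, l, hij, ⟨hadj, hk, hl⟩, rfl⟩
  exact hmap (Ideal.mem_map_of_mem _ hh)

/-- Key lemma (generalized Ohtani): `h ∈ J_{K_m, G_v}` implies `h - subV h ∈ J_{K_m, G}`. -/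
lemma sub_subV_mem_genBEI (G : SimpleGraph (Fin n)) {h : MvPolynomial (Fin m × Fin n) K}
    (hh : h ∈ genBEI K m n (addNbrEdges G v)) :
    h - subV K m n v h ∈ genBEI K m n G := by
  let T : Ideal (MvPolynomial (Fin m × Fin n) K) :=
    { carrier := {h | h - subV K m n v h ∈ genBEI K m n G ∧
        subV K m n v h ∈ genBEI K m n (delVtx (addNbrEdges G v) v)}
      zero_mem' := by simp
      add_mem' := by
        rintro a b ⟨ha1, ha2⟩ ⟨hb1, hb2⟩
        refine ⟨?_, by rw [map_add]; exact add_mem ha2 hb2⟩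
        have e : a + b - subV K m n v (a + b)
            = (a - subV K m n v a) + (b - subV K m n v b) := by rw [map_add]; ring
        rw [e]; exact add_mem ha1 hb1
      smul_mem' := by
        rintro c x ⟨hx1, hx2⟩
        simp only [smul_eq_mul, Set.mem_setOf_eq]
        refine ⟨?_, by rw [map_mul]; exact Ideal.mul_mem_left _ _ hx2⟩
        have e : c * x - subV K m n v (c * x)
            = c * (x - subV K m n v x)
              + (c - subV K m n v c) * subV K m n v x := by rw [map_mul]; ring
        rw [e]
        refine add_mem (Ideal.mul_mem_left _ _ hx1) ?_
        exact Pvert_mul_le K m n v G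
          (Ideal.mul_mem_mul (sub_subV_mem_Pvert K m n v c) hx2) }
  have hle : genBEI K m n (addNbrEdges G v) ≤ T := by
    rw [genBEI]
    refine Ideal.span_le.mpr ?_
    rintro f ⟨i, j, k, l, hij, hadj, rfl⟩
    show _ ∈ T
    by_cases hk : k = v
    · have hl : l ≠ v := fun h => (addNbrEdges G v).loopless.irrefl k ((hk.trans h.symm) ▸ hadj)
      have hG : G.Adj k l := by
        rcases hadj with hG | ⟨_, h1, _⟩
        · exact hG
        · exact ((G.loopless.irrefl v (hk ▸ h1)).elim)
      have hφ : subV K m n v (X (i, k) * X (j, l) - X (i, l) * X (j, k)) = 0 := by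
        simp [subV_X, hk, hl]
      refine ⟨?_, ?_⟩
      · rw [hφ, sub_zero]
        exact Ideal.subset_span ⟨i, j, k, l, hij, hG, rfl⟩
      · rw [hφ]; exact zero_mem _
    · by_cases hl : l = v
      · have hG : G.Adj k l := by
          rcases hadj with hG | ⟨_, _, h2⟩
          · exact hG
          · exact ((G.loopless.irrefl v (hl ▸ h2)).elim)
        have hφ : subV K m n v (X (i, k) * X (j, l) - X (i, l) * X (j, k)) = 0 := by
          simp [subV_X, hk, hl]
        refine ⟨?_, ?_⟩
        · rw [hφ, sub_zero]
          exact Ideal.subset_span ⟨i, j, k, l, hij, hG, rfl⟩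
        · rw [hφ]; exact zero_mem _
      · have hφ : subV K m n v (X (i, k) * X (j, l) - X (i, l) * X (j, k))
            = X (i, k) * X (j, l) - X (i, l) * X (j, k) := by
          simp [subV_X, hk, hl]
        refine ⟨?_, ?_⟩
        · rw [hφ, sub_self]; exact zero_mem _
        · rw [hφ]
          exact Ideal.subset_span ⟨i, j, k, l, hij, ⟨hadj, hk, hl⟩, rfl⟩
  exact (hle hh).1

/-- `subV` maps `P_v + J_{K_m, G ∖ v}` into `J_{K_m, G ∖ v}`. -/
lemma subV_sup_mem (G : SimpleGraph (Fin n)) {h : MvPolynomial (Fin m × Fin n) K}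
    (hh : h ∈ Pvert K m n v + genBEI K m n (delVtx G v)) :
    subV K m n v h ∈ genBEI K m n (delVtx G v) := by
  have hmap : (Pvert K m n v + genBEI K m n (delVtx G v)).map (subV K m n v).toRingHom
      ≤ genBEI K m n (delVtx G v) := by
    rw [Submodule.add_eq_sup, Ideal.map_sup]
    refine sup_le ?_ ?_
    · rw [Pvert, Ideal.map_span]
      refine Ideal.span_le.mpr ?_
      rintro x ⟨f, ⟨i, rfl⟩, rfl⟩
      simp [subV_X]
    · rw [genBEI, Ideal.map_span]
      refine Ideal.span_le.mpr ?_
      rintro x ⟨f, ⟨i, j, k, l, hij, ⟨hG, hk, hl⟩, rfl⟩, rfl⟩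
      simp only [AlgHom.toRingHom_eq_coe, RingHom.coe_coe, map_sub, map_mul, subV_X,
        if_neg hk, if_neg hl]
      exact Ideal.subset_span ⟨i, j, k, l, hij, ⟨hG, hk, hl⟩, rfl⟩
  exact hmap (Ideal.mem_map_of_mem _ hh)

end Aux

section Main

variable (K : Type*) [Field K] (m n : ℕ) (G : SimpleGraph (Fin n)) (v : Fin n)

open Submodule in
lemma firstMap_mk (f : MvPolynomial (Fin m × Fin n) K) :
    firstMap K m n G v (Submodule.Quotient.mk f)
      = (Submodule.Quotient.mk f, Submodule.Quotient.mk f) := rfl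

open Submodule in
lemma secondMap_mk (f g : MvPolynomial (Fin m × Fin n) K) :
    secondMap K m n G v (Submodule.Quotient.mk f, Submodule.Quotient.mk g)
      = Submodule.Quotient.mk (f - g) := by
  simp only [secondMap, LinearMap.sub_apply, LinearMap.comp_apply, LinearMap.fst_apply,
    LinearMap.snd_apply, Submodule.mapQ_apply, LinearMap.id_apply]
  rw [← Submodule.Quotient.mk_sub]

lemma firstMap_inj : Function.Injective (firstMap K m n G v) := by
  rw [← LinearMap.ker_eq_bot]
  rw [eq_bot_iff]
  intro x hx
  obtain ⟨f, rfl⟩ := Submodule.mkQ_surjective _ x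
  rw [LinearMap.mem_ker] at hx
  rw [Submodule.mkQ_apply, firstMap_mk, Prod.mk_eq_zero] at hx
  obtain ⟨h1, h2⟩ := hx
  rw [Submodule.Quotient.mk_eq_zero] at h1 h2
  rw [Submodule.mkQ_apply, Submodule.mem_bot, Submodule.Quotient.mk_eq_zero]
  have key : f - subV K m n v f ∈ genBEI K m n G := sub_subV_mem_genBEI K m n v G h1
  have key2 : subV K m n v f ∈ genBEI K m n (delVtx G v) := subV_sup_mem K m n v G h2
  have key3 : subV K m n v f ∈ genBEI K m n G :=
    genBEI_mono K m n (G := delVtx G v) (H := G) (fun a b h => h.1) key2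
  have := add_mem key key3
  rwa [sub_add_cancel] at this

lemma middle_le : Pvert K m n v + genBEI K m n (delVtx (addNbrEdges G v) v)
    ≤ genBEI K m n (addNbrEdges G v) ⊔ (Pvert K m n v + genBEI K m n (delVtx G v)) := by
  rw [Submodule.add_eq_sup]
  refine sup_le (le_sup_of_le_right ?_) ?_
  · rw [Submodule.add_eq_sup]; exact le_sup_left
  · rw [genBEI]
    refine Ideal.span_le.mpr ?_
    rintro f ⟨i, j, k, l, hij, ⟨hadj, hk, hl⟩, rfl⟩
    rcases hadj with hG | hextra
    · exact Submodule.mem_sup_right (Submodule.mem_sup_right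
        (Ideal.subset_span ⟨i, j, k, l, hij, ⟨hG, hk, hl⟩, rfl⟩))
    · exact Submodule.mem_sup_left
        (Ideal.subset_span ⟨i, j, k, l, hij, Or.inr hextra, rfl⟩)

end Main

/-- if `m ≥ 2` and `v` is an internal vertex of `G`, then the sequence
`0 → S/J_{K_m,G} → S/J_{K_m,G_v} ⊕ S/(P_v + J_{K_m,G∖v}) → S/(P_v + J_{K_m,G_v∖v}) → 0`
is exact, where the first map sends the class of `f` to the pair of classes of `f` and
the second map sends a pair of classes of `(f, g)` to the class of `f − g`. -/
theorem stmt4 (K : Type*) [Field K] (m n : ℕ) (hm : 2 ≤ m) (G : SimpleGraph (Fin n))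
    (v : Fin n) (hv : InternalVtx G v) :
    Function.Injective (firstMap K m n G v) ∧
    Function.Exact (firstMap K m n G v) (secondMap K m n G v) ∧
    Function.Surjective (secondMap K m n G v) := by
  refine ⟨firstMap_inj K m n G v, ?_, ?_⟩
  · rw [LinearMap.exact_iff]
    ext x
    constructor
    · intro hx
      obtain ⟨a, b⟩ := x
      obtain ⟨f, rfl⟩ := Submodule.Quotient.mk_surjective _ a
      obtain ⟨g, rfl⟩ := Submodule.Quotient.mk_surjective _ b
      rw [LinearMap.mem_ker, secondMap_mk, Submodule.Quotient.mk_eq_zero] at hx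
      have hsup := middle_le K m n G v hx
      rw [Submodule.mem_sup] at hsup
      obtain ⟨α, hα, β, hβ, hsum⟩ := hsup
      refine ⟨Submodule.Quotient.mk (f - α), ?_⟩
      rw [firstMap_mk, Prod.mk.injEq]
      constructor
      · rw [Submodule.Quotient.eq]
        have e : f - α - f = -α := by ring
        rw [e]; exact neg_mem hα
      · rw [Submodule.Quotient.eq]
        have e : f - α - g = β := by
          have : f - g = α + β := hsum.symm
          rw [sub_sub, add_comm α, ← sub_sub, this]; ring
        rw [e]; exact hβ
    · rintro ⟨y, rfl⟩
      obtain ⟨f, rfl⟩ := Submodule.Quotient.mk_surjective _ y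
      rw [LinearMap.mem_ker, firstMap_mk, secondMap_mk, sub_self]
      exact Submodule.Quotient.mk_eq_zero _ |>.mpr (zero_mem _)
  · intro y
    obtain ⟨f, rfl⟩ := Submodule.Quotient.mk_surjective _ y
    refine ⟨(Submodule.Quotient.mk f, Submodule.Quotient.mk 0), ?_⟩
    rw [secondMap_mk, sub_zero]
end

section
/- Fix an integer m ≥ 2. The map ψ defined on finite simple graphs by ψ(G) = n(G) + γ_m(G) (an integer-valued map) is a (reg,m)-compatible map, i.e., it satisfies conditions (a), (b) and (c) of the definition of (reg,m)-compatibility. -/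
/-- `γ_m(G) = Σ_i min {m − ω(G_i) − 1, −1}`, the sum being over the connected
components `G_i` of `G`. -/
noncomputable def gammaM (m : ℕ) {V : Type*} (G : SimpleGraph V) : ℤ :=
  ∑ᶠ c : G.ConnectedComponent,
    min ((m : ℤ) - (clqNum (G.induce c.supp) : ℤ) - 1) (-1)

/-- A map `ψ` from finite simple graphs to `ℤ` is `(reg, m)`-compatible if:
(a) `ψ(Ĝ) ≤ ψ(G)` where `Ĝ` is obtained from `G` by deleting all isolated vertices;
(b) if every connected component of `G` is a complete graph on at least 2 vertices,
then `ψ(G) ≥ Σ_i min {m − 1, n_i − 1}` where the `n_i` are the component sizes;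
(c) if some connected component of `G` is not complete, then there is an internal vertex
`v` with `ψ(G∖v) ≤ ψ(G)` and `ψ(G_v) < ψ(G)`, or with `ψ(G∖v) ≤ ψ(G)`,
`ψ(G_v) = ψ(G)` and `ψ(G_v∖v) < ψ(G)`. -/
def RegCompatibleZ (m : ℕ) (ψ : ∀ (V : Type) [Finite V], SimpleGraph V → ℤ) : Prop :=
  (∀ (V : Type) [Finite V] (G : SimpleGraph V),
      ψ _ (G.induce {u : V | ∃ w : V, G.Adj u w}) ≤ ψ V G) ∧
  (∀ (V : Type) [Finite V] (G : SimpleGraph V),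
      (∀ u w : V, G.Reachable u w → u ≠ w → G.Adj u w) →
      (∀ u : V, ∃ w : V, u ≠ w ∧ G.Reachable u w) →
      ∑ᶠ c : G.ConnectedComponent, min ((m : ℤ) - 1) ((c.supp.ncard : ℤ) - 1) ≤ ψ V G) ∧
  (∀ (V : Type) [Finite V] (G : SimpleGraph V),
      (∃ u w : V, u ≠ w ∧ G.Reachable u w ∧ ¬ G.Adj u w) →
      ∃ v : V, InternalVtx G v ∧
        ((ψ _ (G.induce {u : V | u ≠ v}) ≤ ψ V G ∧ ψ V (addNbrEdges G v) < ψ V G) ∨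
          (ψ _ (G.induce {u : V | u ≠ v}) ≤ ψ V G ∧ ψ V (addNbrEdges G v) = ψ V G ∧
            ψ _ ((addNbrEdges G v).induce {u : V | u ≠ v}) < ψ V G)))


open SimpleGraph
open scoped Classical

set_option linter.unusedSectionVars false

section basic
variable {V : Type*} [Finite V] {G : SimpleGraph V}

lemma clq_bdd (G : SimpleGraph V) : BddAbove {k : ℕ | ∃ s : Set V, G.IsClique s ∧ s.ncard = k} := by
  refine ⟨Nat.card V, ?_⟩
  rintro k ⟨s, -, rfl⟩
  have := Set.ncard_le_ncard (Set.subset_univ s) Set.finite_univ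
  simpa [Set.ncard_univ] using this

lemma le_clqNum {s : Set V} (hs : G.IsClique s) : s.ncard ≤ clqNum G :=
  le_csSup (clq_bdd G) ⟨s, hs, rfl⟩

lemma clqNum_le_card (G : SimpleGraph V) : clqNum G ≤ Nat.card V := by
  have h0 : (0 : ℕ) ∈ {k : ℕ | ∃ s : Set V, G.IsClique s ∧ s.ncard = k} :=
    ⟨∅, by simp [SimpleGraph.IsClique], by simp⟩
  refine csSup_le ⟨0, h0⟩ ?_
  rintro k ⟨s, -, rfl⟩
  have := Set.ncard_le_ncard (Set.subset_univ s) Set.finite_univ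
  simpa [Set.ncard_univ] using this

lemma exists_clqNum (G : SimpleGraph V) : ∃ s : Set V, G.IsClique s ∧ s.ncard = clqNum G := by
  have h0 : (0 : ℕ) ∈ {k : ℕ | ∃ s : Set V, G.IsClique s ∧ s.ncard = k} :=
    ⟨∅, by simp [SimpleGraph.IsClique], by simp⟩
  exact Nat.sSup_mem ⟨0, h0⟩ (clq_bdd G)

lemma clqNum_mono {H : SimpleGraph V} (h : G ≤ H) : clqNum G ≤ clqNum H := by
  obtain ⟨s, hs, hc⟩ := exists_clqNum G
  rw [← hc]
  exact le_clqNum (hs.mono h)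

lemma clqNum_one_pos (x : V) : 1 ≤ clqNum G := by
  have : ({x} : Set V).ncard ≤ clqNum G := le_clqNum (by simp)
  simpa using this

lemma clqNum_le_of_embedding {W : Type*} [Finite W] {H : SimpleGraph W} (f : G ↪g H) :
    clqNum G ≤ clqNum H := by
  obtain ⟨s, hs, hc⟩ := exists_clqNum G
  rw [← hc]
  have hclq : H.IsClique (f '' s) := by
    rintro - ⟨a, ha, rfl⟩ - ⟨b, hb, rfl⟩ hne
    have hab : a ≠ b := fun h => hne (by rw [h])
    exact f.map_adj_iff.2 (hs ha hb hab)
  have := le_clqNum hclq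
  rwa [Set.ncard_image_of_injective _ f.injective] at this

/-- cliques of induced subgraphs, as sets in `V`. -/
lemma isClique_induce_iff {s : Set V} {K : Set ↥s} :
    (G.induce s).IsClique K ↔ G.IsClique (Subtype.val '' K) := by
  constructor
  · rintro h - ⟨a, ha, rfl⟩ - ⟨b, hb, rfl⟩ hne
    have : a ≠ b := fun hh => hne (by rw [hh])
    exact h ha hb this
  · intro h a ha b hb hne
    exact h ⟨a, ha, rfl⟩ ⟨b, hb, rfl⟩ (fun hh => hne (Subtype.val_injective hh))

lemma ncard_le_clqNum_induce {s K : Set V} (hK : G.IsClique K) (hKs : K ⊆ s) :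
    K.ncard ≤ clqNum (G.induce s) := by
  set K' : Set ↥s := Subtype.val ⁻¹' K with hK'
  have himg : Subtype.val '' K' = K := by
    rw [hK', Set.image_preimage_eq_inter_range, Subtype.range_val]
    exact Set.inter_eq_self_of_subset_left hKs
  have hclq : (G.induce s).IsClique K' := by
    rw [isClique_induce_iff, himg]; exact hK
  have := le_clqNum hclq
  rwa [← Set.ncard_image_of_injective K' Subtype.val_injective, himg] at this

lemma clqNum_induce_induce (G : SimpleGraph V) (s : Set V) (t : Set ↥s) :
    clqNum ((G.induce s).induce t) = clqNum (G.induce (Subtype.val '' t)) := by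
  have f : ((G.induce s).induce t) ↪g (G.induce (Subtype.val '' t)) := by
    refine ⟨⟨fun a => ⟨a.1.1, ⟨a.1, a.2, rfl⟩⟩, ?_⟩, ?_⟩
    · intro a b hab
      have : a.1.1 = b.1.1 := by simpa using congrArg Subtype.val hab
      ext1; ext1; exact this
    · intro a b
      exact Iff.rfl
  have g : (G.induce (Subtype.val '' t)) ↪g ((G.induce s).induce t) := by
    have hbij : Function.Bijective (fun a : ↥t => (⟨a.1.1, ⟨a.1, a.2, rfl⟩⟩ : ↥(Subtype.val '' t))) := by
      constructor
      · intro a b hab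
        have : a.1.1 = b.1.1 := by simpa using congrArg Subtype.val hab
        ext1; ext1; exact this
      · rintro ⟨-, a, ha, rfl⟩
        exact ⟨⟨a, ha⟩, rfl⟩
    let e := Equiv.ofBijective _ hbij
    refine ⟨e.symm.toEmbedding, ?_⟩
    intro a b
    have ha : Subtype.val (Subtype.val (e.symm a)) = a.1 := by
      have := e.apply_symm_apply a
      exact congrArg (Subtype.val) this
    have hb : Subtype.val (Subtype.val (e.symm b)) = b.1 := by
      have := e.apply_symm_apply b
      exact congrArg (Subtype.val) this
    show G.Adj (e.symm a).1.1 (e.symm b).1.1 ↔ G.Adj a.1 b.1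
    rw [ha, hb]
  exact le_antisymm (clqNum_le_of_embedding f) (clqNum_le_of_embedding g)

end basic



section walks
variable {V : Type*} {G : SimpleGraph V}

lemma reachable_of_mem_support {x y z : V} (w : G.Walk x y) (hz : z ∈ w.support) :
    G.Reachable x z := by
  classical
  exact ⟨w.takeUntil z hz⟩

lemma reachable_induce {s : Set V} :
    ∀ {x y : V} (w : G.Walk x y), (∀ z ∈ w.support, z ∈ s) →
      ∀ (hx : x ∈ s) (hy : y ∈ s), (G.induce s).Reachable ⟨x, hx⟩ ⟨y, hy⟩ := by
  intro x y w
  induction w with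
  | nil => intro _ hx hy; exact Reachable.refl _
  | @cons a b c h p ih =>
    intro hsup hx hy
    have hb : b ∈ s := hsup b (by simp)
    have step : (G.induce s).Adj ⟨a, hx⟩ ⟨b, hb⟩ := h
    exact (step.reachable).trans (ih (fun z hz => hsup z (by simp [hz])) hb hy)

lemma reachable_addNbr {v x y : V} (h : (addNbrEdges G v).Reachable x y) : G.Reachable x y := by
  obtain ⟨w⟩ := h
  induction w with
  | nil => exact Reachable.refl _
  | @cons a b c h p ih =>
    refine Reachable.trans ?_ ih
    rcases h with h | ⟨-, h1, h2⟩
    · exact h.reachable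
    · exact (h1.symm.reachable).trans h2.reachable

lemma exists_neighbor_of_reachable_ne {x y : V} (h : G.Reachable x y) (hne : x ≠ y) :
    ∃ z, G.Adj x z := by
  obtain ⟨w⟩ := h
  cases w with
  | nil => exact absurd rfl hne
  | cons h p => exact ⟨_, h⟩

lemma exists_cherry :
    ∀ {u w : V} (wk : G.Walk u w), u ≠ w → ¬ G.Adj u w →
      ∃ v p q : V, G.Adj v p ∧ G.Adj v q ∧ p ≠ q ∧ ¬ G.Adj p q := by
  intro u w wk
  induction wk with
  | nil => intro h _; exact absurd rfl h
  | @cons a b c h p ih =>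
    intro hne hnadj
    by_cases hbc : b = c
    · subst hbc; exact absurd h hnadj
    · by_cases hadj : G.Adj b c
      · exact ⟨b, a, c, h.symm, hadj, hne, hnadj⟩
      · exact ih hbc hadj
end walks

section comps
variable {V : Type*} [Finite V] {G : SimpleGraph V}

noncomputable def cw (m : ℕ) (G : SimpleGraph V) (c : G.ConnectedComponent) : ℤ :=
  (c.supp.ncard : ℤ) + min ((m : ℤ) - (clqNum (G.induce c.supp) : ℤ) - 1) (-1)

lemma supp_eq_coe_filter [Fintype V] [DecidableEq G.ConnectedComponent] (c : G.ConnectedComponent) :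
    c.supp = ↑(Finset.univ.filter fun v => G.connectedComponentMk v = c) := by
  ext x
  simp [ConnectedComponent.mem_supp_iff]

lemma sum_ncard_supp_filter [Fintype V] (P : G.ConnectedComponent → Prop) :
    ∑ᶠ c : G.ConnectedComponent, (if P c then (c.supp.ncard : ℤ) else 0)
      = ((Finset.univ.filter fun v : V => P (G.connectedComponentMk v)).card : ℤ) := by
  classical
  letI : Fintype G.ConnectedComponent := Fintype.ofFinite _
  rw [finsum_eq_sum_of_fintype]
  rw [Finset.card_eq_sum_card_fiberwise
    (f := G.connectedComponentMk) (t := Finset.univ.filter P) (fun x hx => by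
      simp only [Finset.mem_coe, Finset.mem_filter, Finset.mem_univ, true_and] at hx ⊢; exact hx)]
  push_cast
  rw [← Finset.sum_filter]
  refine Finset.sum_congr rfl fun c hc => ?_
  have hPc : P c := by simpa using hc
  congr 1
  rw [supp_eq_coe_filter c, Set.ncard_coe_finset]
  congr 1
  ext x
  simp only [Finset.mem_filter, Finset.mem_univ, true_and, Finset.filter_filter]
  constructor
  · intro h; exact ⟨by rw [h]; exact hPc, h⟩
  · intro h; exact h.2

lemma sum_ncard_supp (G : SimpleGraph V) :
    ∑ᶠ c : G.ConnectedComponent, (c.supp.ncard : ℤ) = (Nat.card V : ℤ) := by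
  classical
  cases nonempty_fintype V
  have := sum_ncard_supp_filter (G := G) (fun _ => True)
  simp only [if_true, Finset.filter_true] at this
  rw [this]
  simp [Nat.card_eq_fintype_card]

lemma psi_eq (m : ℕ) (G : SimpleGraph V) :
    (Nat.card V : ℤ) + gammaM m G = ∑ᶠ c : G.ConnectedComponent, cw m G c := by
  unfold gammaM cw
  rw [← sum_ncard_supp G, ← finsum_add_distrib (Set.toFinite _) (Set.toFinite _)]

/-- The map from components of an induced subgraph to components of `G`. -/
noncomputable def cmap (G : SimpleGraph V) (s : Set V) :
    (G.induce s).ConnectedComponent → G.ConnectedComponent :=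
  ConnectedComponent.map (Embedding.induce s).toHom

lemma cmap_mk {s : Set V} (x : ↥s) :
    cmap G s ((G.induce s).connectedComponentMk x) = G.connectedComponentMk x.1 :=
  ConnectedComponent.map_mk _ _

lemma mem_supp_cmap {s : Set V} (c : (G.induce s).ConnectedComponent) (x : ↥s)
    (hx : x ∈ c.supp) : (x : V) ∈ (cmap G s c).supp := by
  revert hx
  induction c using SimpleGraph.ConnectedComponent.ind with
  | _ y =>
    intro hx
    rw [ConnectedComponent.mem_supp_iff] at hx
    have h2 := congrArg (cmap G s) hx
    rw [cmap_mk, cmap_mk] at h2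
    rw [cmap_mk, ConnectedComponent.mem_supp_iff]
    exact h2

lemma supp_eq_image {s : Set V} (c : (G.induce s).ConnectedComponent)
    (hsupp : ∀ y ∈ (cmap G s c).supp, y ∈ s) :
    (cmap G s c).supp = Subtype.val '' c.supp := by
  revert hsupp
  induction c using SimpleGraph.ConnectedComponent.ind with
  | _ x =>
  intro hsupp
  ext y
  constructor
  · intro hy
    have hys : y ∈ s := hsupp y hy
    rw [cmap_mk, ConnectedComponent.mem_supp_iff, ConnectedComponent.eq] at hy
    obtain ⟨w⟩ := hy
    have hall : ∀ z ∈ w.support, z ∈ s := by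
      intro z hz
      refine hsupp z ?_
      rw [cmap_mk, ConnectedComponent.mem_supp_iff, ConnectedComponent.eq]
      exact ((reachable_of_mem_support w hz).symm).trans ⟨w⟩
    have := reachable_induce w hall hys x.2
    refine ⟨⟨y, hys⟩, ?_, rfl⟩
    rw [ConnectedComponent.mem_supp_iff, ConnectedComponent.eq]
    exact this
  · rintro ⟨z, hz, rfl⟩
    exact mem_supp_cmap _ z hz

lemma cw_cmap_eq {m : ℕ} {s : Set V} (c : (G.induce s).ConnectedComponent)
    (h : (cmap G s c).supp = Subtype.val '' c.supp) :
    cw m G (cmap G s c) = cw m (G.induce s) c := by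
  unfold cw
  rw [h, Set.ncard_image_of_injective _ Subtype.val_injective,
    clqNum_induce_induce G s c.supp]

end comps

section del
variable {V : Type*} [Finite V] {G : SimpleGraph V}

lemma cmap_inj {s : Set V} {c₁ c₂ : (G.induce s).ConnectedComponent}
    (hs : ∀ y ∈ (cmap G s c₁).supp, y ∈ s)
    (h : cmap G s c₁ = cmap G s c₂) : c₁ = c₂ := by
  revert hs h
  induction c₁ using SimpleGraph.ConnectedComponent.ind with | _ x =>
  induction c₂ using SimpleGraph.ConnectedComponent.ind with | _ y =>
  intro hs h
  rw [cmap_mk, cmap_mk, ConnectedComponent.eq] at h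
  obtain ⟨w⟩ := h
  have hall : ∀ z ∈ w.support, z ∈ s := by
    intro z hz
    refine hs z ?_
    rw [cmap_mk, ConnectedComponent.mem_supp_iff, ConnectedComponent.eq]
    exact (reachable_of_mem_support w hz).symm
  have hr := reachable_induce w hall x.2 y.2
  exact ConnectedComponent.sound hr

lemma cmap_surj {s : Set V} (d : G.ConnectedComponent) (hd : ∀ y ∈ d.supp, y ∈ s) :
    ∃ c, cmap G s c = d := by
  revert hd
  induction d using SimpleGraph.ConnectedComponent.ind with | _ x =>
  intro hd
  have hx : x ∈ s := hd x ((ConnectedComponent.mem_supp_iff _ _).2 rfl)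
  exact ⟨(G.induce s).connectedComponentMk ⟨x, hx⟩, cmap_mk _⟩

lemma sum_ite_le {α : Type*} [Fintype α] (P : α → Prop) (f : α → ℤ) (b : ℤ)
    (hf : ∀ a, P a → f a ≤ -1) (c₀ : α) (hc₀ : P c₀) (hb : f c₀ ≤ b) :
    ∑ a : α, (if P a then f a else 0) ≤ b := by
  have hterm : ∀ a : α, (if P a then f a else 0) ≤ (if a = c₀ then b else 0) := by
    intro a
    by_cases h1 : a = c₀
    · subst h1; simp only [if_pos rfl, if_pos hc₀]; exact hb
    · simp only [if_neg h1]
      by_cases h2 : P a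
      · simp only [if_pos h2]; linarith [hf a h2]
      · simp only [if_neg h2]; exact le_refl 0
  calc ∑ a : α, (if P a then f a else 0) ≤ ∑ a : α, (if a = c₀ then b else 0) :=
        Finset.sum_le_sum (fun a _ => hterm a)
    _ = b := by simp

lemma clique_in_piece (H : SimpleGraph V) (v : V) {K' : Set V} (hclq : H.IsClique K')
    (hKv : v ∉ K') {x₀ : V} (hx₀ : x₀ ∈ K') (hx₀v : x₀ ≠ v) :
    K'.ncard ≤ clqNum ((H.induce {u : V | u ≠ v}).induce
      ((H.induce {u : V | u ≠ v}).connectedComponentMk ⟨x₀, hx₀v⟩).supp) := by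
  set s : Set V := {u : V | u ≠ v} with hs
  set H' := H.induce s with hH'
  set c₀ := H'.connectedComponentMk ⟨x₀, hx₀v⟩ with hc₀
  set K'' : Set ↥s := Subtype.val ⁻¹' K' with hK''
  have himg : Subtype.val '' K'' = K' := by
    rw [hK'', Set.image_preimage_eq_inter_range, Subtype.range_val]
    apply Set.inter_eq_self_of_subset_left
    intro y hy
    exact fun h => hKv (h ▸ hy)
  have hclq'' : H'.IsClique K'' := by
    rw [hH', isClique_induce_iff, himg]; exact hclq
  have hmem : (⟨x₀, hx₀v⟩ : ↥s) ∈ K'' := hx₀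
  have hsub : K'' ⊆ c₀.supp := by
    intro y hy
    rw [ConnectedComponent.mem_supp_iff]
    by_cases hyx : y = (⟨x₀, hx₀v⟩ : ↥s)
    · rw [hyx]
    · exact ConnectedComponent.sound (hclq'' hy hmem hyx).reachable
  have hfin := ncard_le_clqNum_induce hclq'' hsub
  rwa [← himg, Set.ncard_image_of_injective _ Subtype.val_injective]

lemma pieces_f_le (m : ℕ) (H : SimpleGraph V) (v : V) {K' : Set V} (hclq : H.IsClique K')
    (hKD : K' ⊆ (H.connectedComponentMk v).supp) (hKv : v ∉ K')
    {x₀ : V} (hx₀ : x₀ ∈ K') (b : ℤ)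
    (hb : min ((m : ℤ) - (K'.ncard : ℤ) - 1) (-1) ≤ b) :
    ∑ᶠ c : (H.induce {u : V | u ≠ v}).ConnectedComponent,
        (if cmap H {u : V | u ≠ v} c = H.connectedComponentMk v
         then min ((m : ℤ) - (clqNum ((H.induce {u : V | u ≠ v}).induce c.supp) : ℤ) - 1) (-1)
         else 0)
      ≤ b := by
  classical
  have hx₀v : x₀ ≠ v := fun h => hKv (h ▸ hx₀)
  letI : Fintype V := Fintype.ofFinite V
  letI : Fintype (H.induce {u : V | u ≠ v}).ConnectedComponent := Fintype.ofFinite _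
  rw [finsum_eq_sum_of_fintype]
  set c₀ := (H.induce {u : V | u ≠ v}).connectedComponentMk ⟨x₀, hx₀v⟩ with hc₀def
  refine sum_ite_le _ _ b (fun a _ => min_le_right _ _) c₀ ?_ ?_
  · rw [hc₀def, cmap_mk]
    exact (ConnectedComponent.mem_supp_iff _ _).1 (hKD hx₀)
  · have h1 := clique_in_piece H v hclq hKv hx₀ hx₀v
    have h2 : ((K'.ncard : ℤ)) ≤ (clqNum ((H.induce {u : V | u ≠ v}).induce c₀.supp) : ℤ) := by
      exact_mod_cast h1
    refine le_trans ?_ hb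
    omega

lemma psi_delete_core (m : ℕ) (H : SimpleGraph V) (v : V) (e : ℤ)
    (hpieces : ∑ᶠ c : (H.induce {u : V | u ≠ v}).ConnectedComponent,
        (if cmap H {u : V | u ≠ v} c = H.connectedComponentMk v
         then min ((m : ℤ) - (clqNum ((H.induce {u : V | u ≠ v}).induce c.supp) : ℤ) - 1) (-1)
         else 0)
      ≤ min ((m : ℤ) - (clqNum (H.induce (H.connectedComponentMk v).supp) : ℤ) - 1) (-1) + e) :
    (Nat.card {u : V | u ≠ v} : ℤ) + gammaM m (H.induce {u : V | u ≠ v})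
      ≤ (Nat.card V : ℤ) + gammaM m H - 1 + e := by
  classical
  set s : Set V := {u : V | u ≠ v} with hsdef
  set D := H.connectedComponentMk v with hD
  letI : Fintype V := Fintype.ofFinite V
  letI : Fintype H.ConnectedComponent := Fintype.ofFinite _
  letI : Fintype (H.induce s).ConnectedComponent := Fintype.ofFinite _
  have hDv : v ∈ D.supp := (ConnectedComponent.mem_supp_iff _ _).2 rfl
  have hclosed : ∀ c : (H.induce s).ConnectedComponent, cmap H s c ≠ D → ∀ y ∈ (cmap H s c).supp, y ∈ s := by
    intro c hc y hy
    intro hyv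
    apply hc
    rw [ConnectedComponent.mem_supp_iff] at hy
    rw [← hy, hyv]
  have hcw : ∀ c : (H.induce s).ConnectedComponent, cmap H s c ≠ D → cw m H (cmap H s c) = cw m (H.induce s) c :=
    fun c hc => cw_cmap_eq c (supp_eq_image c (hclosed c hc))
  rw [psi_eq, psi_eq, finsum_eq_sum_of_fintype, finsum_eq_sum_of_fintype]
  rw [finsum_eq_sum_of_fintype] at hpieces
  rw [← Finset.sum_filter_add_sum_filter_not Finset.univ (fun c => cmap H s c = D) (cw m (H.induce s))]
  rw [← Finset.sum_filter_add_sum_filter_not Finset.univ (fun d => d = D) (cw m H)]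
  have hRD : ∑ d ∈ Finset.univ.filter (fun d => d = D), cw m H d = cw m H D := by
    rw [Finset.sum_filter, Finset.sum_ite_eq' Finset.univ D (cw m H)]
    simp
  have hmatch : ∑ c ∈ Finset.univ.filter (fun c => ¬ cmap H s c = D), cw m (H.induce s) c
      = ∑ d ∈ Finset.univ.filter (fun d => ¬ d = D), cw m H d := by
    refine Finset.sum_bij (fun c _ => cmap H s c) ?_ ?_ ?_ ?_
    · intro a ha
      simp only [Finset.mem_filter, Finset.mem_univ, true_and] at ha ⊢
      exact ha
    · intro a₁ ha₁ a₂ ha₂ h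
      simp only [Finset.mem_filter, Finset.mem_univ, true_and] at ha₁
      exact cmap_inj (hclosed a₁ ha₁) h
    · intro d hd
      simp only [Finset.mem_filter, Finset.mem_univ, true_and] at hd
      have hdm : ∀ y ∈ d.supp, y ∈ s := by
        intro y hy hyv
        apply hd
        rw [ConnectedComponent.mem_supp_iff] at hy
        rw [← hy, hyv]
      obtain ⟨c, hc⟩ := cmap_surj d hdm
      refine ⟨c, ?_, hc⟩
      simp only [Finset.mem_filter, Finset.mem_univ, true_and]
      rw [hc]; exact hd
    · intro a ha
      simp only [Finset.mem_filter, Finset.mem_univ, true_and] at ha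
      exact (hcw a ha).symm
  -- number of vertices in the pieces
  have hncard1 : 1 ≤ D.supp.ncard := (Set.ncard_pos).2 ⟨v, hDv⟩
  have hN : ∑ c ∈ Finset.univ.filter (fun c : (H.induce s).ConnectedComponent => cmap H s c = D),
      ((c.supp.ncard : ℤ)) = (D.supp.ncard : ℤ) - 1 := by
    have h1 := sum_ncard_supp_filter (G := (H.induce s)) (fun c => cmap H s c = D)
    rw [finsum_eq_sum_of_fintype, ← Finset.sum_filter] at h1
    rw [h1]
    have h2 : ↑(Finset.univ.filter fun u : ↥s => cmap H s ((H.induce s).connectedComponentMk u) = D)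
        = {u : ↥s | (u : V) ∈ D.supp} := by
      ext u
      simp only [Finset.coe_filter, Finset.mem_univ, true_and, Set.mem_setOf_eq, cmap_mk,
        ConnectedComponent.mem_supp_iff]
    have h3 : (Finset.univ.filter fun u : ↥s => cmap H s ((H.induce s).connectedComponentMk u) = D).card
        = (D.supp \ {v}).ncard := by
      rw [← Set.ncard_coe_finset, h2]
      rw [← Set.ncard_image_of_injective {u : ↥s | (u : V) ∈ D.supp} Subtype.val_injective]
      congr 1
      ext y
      constructor
      · rintro ⟨⟨z, hz⟩, hz2, rfl⟩
        exact ⟨hz2, hz⟩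
      · rintro ⟨hy1, hy2⟩
        exact ⟨⟨y, hy2⟩, hy1, rfl⟩
    rw [h3, Set.ncard_diff_singleton_of_mem hDv]
    push_cast [Nat.cast_sub hncard1]
    ring
  have hpieceB : ∑ c ∈ Finset.univ.filter (fun c : (H.induce s).ConnectedComponent => cmap H s c = D),
      cw m (H.induce s) c ≤ cw m H D - 1 + e := by
    unfold cw
    rw [Finset.sum_add_distrib, hN]
    have h4 : ∑ c ∈ Finset.univ.filter (fun c : (H.induce s).ConnectedComponent => cmap H s c = D),
        min ((m : ℤ) - (clqNum ((H.induce s).induce c.supp) : ℤ) - 1) (-1)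
        ≤ min ((m : ℤ) - (clqNum (H.induce D.supp) : ℤ) - 1) (-1) + e := by
      rw [Finset.sum_filter]
      exact hpieces
    linarith
  rw [hRD]
  linarith [hmatch, hpieceB]

lemma clqNum_component_pos (H : SimpleGraph V) (v : V) :
    1 ≤ clqNum (H.induce (H.connectedComponentMk v).supp) :=
  clqNum_one_pos (⟨v, (ConnectedComponent.mem_supp_iff _ _).2 rfl⟩ : ↥(H.connectedComponentMk v).supp)

lemma pair_subset_supp {v p : V} (hp : G.Adj v p) :
    ({v, p} : Set V) ⊆ (G.connectedComponentMk v).supp := by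
  rintro x (rfl | rfl)
  · exact (ConnectedComponent.mem_supp_iff _ _).2 rfl
  · exact (ConnectedComponent.mem_supp_iff _ _).2 (ConnectedComponent.sound hp.symm.reachable)

lemma isClique_pair' {v p : V} (hp : G.Adj v p) : G.IsClique {v, p} := by
  rintro a (rfl | rfl) b (rfl | rfl) hne
  · exact absurd rfl hne
  · exact hp
  · exact hp.symm
  · exact absurd rfl hne

lemma two_le_clqNum_component {v p : V} (hp : G.Adj v p) :
    2 ≤ clqNum (G.induce (G.connectedComponentMk v).supp) := by
  have := ncard_le_clqNum_induce (isClique_pair' hp) (pair_subset_supp hp)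
  rwa [Set.ncard_pair hp.ne] at this

/-- Deleting a non-isolated vertex does not increase ψ. -/
lemma psi_delete_le (m : ℕ) (H : SimpleGraph V) {v p : V} (hp : H.Adj v p) :
    (Nat.card {u : V | u ≠ v} : ℤ) + gammaM m (H.induce {u : V | u ≠ v})
      ≤ (Nat.card V : ℤ) + gammaM m H := by
  have hcore := psi_delete_core m H v 1 ?_
  · linarith
  set D := H.connectedComponentMk v with hD
  set ω := clqNum (H.induce D.supp) with hω
  have hω2 : 2 ≤ ω := two_le_clqNum_component hp
  -- a maximum clique of the component, with v removed
  obtain ⟨Kt, hKt, hKtcard⟩ := exists_clqNum (H.induce D.supp)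
  set K : Set V := (Subtype.val '' Kt) \ {v} with hKdef
  have hKclq : H.IsClique K := by
    have h1 : H.IsClique (Subtype.val '' Kt) := (isClique_induce_iff).1 hKt
    exact h1.subset Set.diff_subset
  have hKD : K ⊆ D.supp := by
    intro x hx
    obtain ⟨⟨y, hy⟩, -, rfl⟩ := hx.1
    exact hy
  have hKv : v ∉ K := fun h => h.2 rfl
  have hKcard : ω - 1 ≤ K.ncard := by
    have himg : (Subtype.val '' Kt).ncard = ω := by
      rw [Set.ncard_image_of_injective _ Subtype.val_injective, hKtcard]
    by_cases hv : v ∈ Subtype.val '' Kt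
    · rw [hKdef, Set.ncard_diff_singleton_of_mem hv, himg]
    · rw [hKdef, Set.diff_singleton_eq_self hv, himg]
      omega
  have hKne : K.Nonempty := by
    apply Set.nonempty_of_ncard_ne_zero
    omega
  obtain ⟨x₀, hx₀⟩ := hKne
  refine pieces_f_le m H v hKclq hKD hKv hx₀ _ ?_
  omega

/-- Deleting a non-isolated vertex strictly decreases ψ, given a maximum clique of the
component avoiding `v`, or if the component weight term is `-1`. -/
lemma psi_delete_lt (m : ℕ) (H : SimpleGraph V) {v p : V} (hp : H.Adj v p)
    (hcase : min ((m : ℤ) - (clqNum (H.induce (H.connectedComponentMk v).supp) : ℤ) - 1) (-1) = -1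
      ∨ ∃ K : Set V, H.IsClique K ∧ K ⊆ (H.connectedComponentMk v).supp ∧ v ∉ K ∧
          clqNum (H.induce (H.connectedComponentMk v).supp) ≤ K.ncard) :
    (Nat.card {u : V | u ≠ v} : ℤ) + gammaM m (H.induce {u : V | u ≠ v})
      ≤ (Nat.card V : ℤ) + gammaM m H - 1 := by
  have hcore := psi_delete_core m H v 0 ?_
  · linarith
  set D := H.connectedComponentMk v with hD
  set ω := clqNum (H.induce D.supp) with hω
  rcases hcase with hf | ⟨K, hKclq, hKD, hKv, hKcard⟩
  · -- use the pair {p} as a (trivial) clique in a piece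
    have hKclq : H.IsClique {p} := by simp
    have hKD : ({p} : Set V) ⊆ D.supp := by
      intro x hx
      rw [hx]
      exact (ConnectedComponent.mem_supp_iff _ _).2 (ConnectedComponent.sound hp.symm.reachable)
    have hKv : v ∉ ({p} : Set V) := by
      intro h
      exact hp.ne (Set.mem_singleton_iff.1 h)
    refine pieces_f_le m H v hKclq hKD hKv rfl _ ?_
    rw [hf]
    simpa using min_le_right ((m : ℤ) - (({p} : Set V).ncard : ℤ) - 1) (-1 : ℤ)
  · have hωpos : 1 ≤ ω := clqNum_component_pos H v
    have hKne : K.Nonempty := by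
      apply Set.nonempty_of_ncard_ne_zero
      omega
    obtain ⟨x₀, hx₀⟩ := hKne
    refine pieces_f_le m H v hKclq hKD hKv hx₀ _ ?_
    omega

end del

section addnbr
variable {V : Type*} [Finite V] {G : SimpleGraph V} {v : V}

lemma le_addNbr (G : SimpleGraph V) (v : V) : G ≤ addNbrEdges G v := fun _ _ h => Or.inl h

def homAdd (G : SimpleGraph V) (v : V) : G →g addNbrEdges G v :=
  ⟨id, fun h => Or.inl h⟩

noncomputable def thetaV (G : SimpleGraph V) (v : V) :
    G.ConnectedComponent → (addNbrEdges G v).ConnectedComponent :=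
  ConnectedComponent.map (homAdd G v)

lemma thetaV_mk (x : V) :
    thetaV G v (G.connectedComponentMk x) = (addNbrEdges G v).connectedComponentMk x :=
  ConnectedComponent.map_mk _ _

lemma thetaV_bij : Function.Bijective (thetaV G v) := by
  constructor
  · intro c₁ c₂ h
    induction c₁ using SimpleGraph.ConnectedComponent.ind with | _ x =>
    induction c₂ using SimpleGraph.ConnectedComponent.ind with | _ y =>
    rw [thetaV_mk, thetaV_mk, ConnectedComponent.eq] at h
    exact ConnectedComponent.sound (reachable_addNbr h)
  · intro d
    induction d using SimpleGraph.ConnectedComponent.ind with | _ x =>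
    exact ⟨G.connectedComponentMk x, thetaV_mk x⟩

lemma supp_thetaV (c : G.ConnectedComponent) : (thetaV G v c).supp = c.supp := by
  induction c using SimpleGraph.ConnectedComponent.ind with | _ x =>
  ext y
  rw [thetaV_mk, ConnectedComponent.mem_supp_iff, ConnectedComponent.mem_supp_iff,
    ConnectedComponent.eq, ConnectedComponent.eq]
  exact ⟨fun h => reachable_addNbr h, fun h => h.mono (le_addNbr G v)⟩

lemma cw_thetaV_eq (m : ℕ) (c : G.ConnectedComponent) (hc : c ≠ G.connectedComponentMk v) :
    cw m (addNbrEdges G v) (thetaV G v c) = cw m G c := by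
  have hgraph : (addNbrEdges G v).induce c.supp = G.induce c.supp := by
    ext a b
    constructor
    · intro h
      rcases h with h | ⟨hne, h1, h2⟩
      · exact h
      · exfalso
        apply hc
        have ha : (a : V) ∈ c.supp := a.2
        rw [ConnectedComponent.mem_supp_iff] at ha
        rw [← ha]
        exact ConnectedComponent.sound h1.symm.reachable
    · intro h
      exact Or.inl h
  unfold cw
  rw [supp_thetaV, hgraph]

lemma psi_addNbr (m : ℕ) (G : SimpleGraph V) (v : V) :
    (Nat.card V : ℤ) + gammaM m (addNbrEdges G v)
      = ((Nat.card V : ℤ) + gammaM m G)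
        + (min ((m : ℤ) - (clqNum ((addNbrEdges G v).induce
              (thetaV G v (G.connectedComponentMk v)).supp) : ℤ) - 1) (-1)
           - min ((m : ℤ) - (clqNum (G.induce (G.connectedComponentMk v).supp) : ℤ) - 1) (-1)) := by
  classical
  letI : Fintype V := Fintype.ofFinite V
  letI : Fintype G.ConnectedComponent := Fintype.ofFinite _
  letI : Fintype (addNbrEdges G v).ConnectedComponent := Fintype.ofFinite _
  rw [psi_eq, psi_eq, finsum_eq_sum_of_fintype, finsum_eq_sum_of_fintype]
  have hsum := Equiv.sum_comp (Equiv.ofBijective (thetaV G v) thetaV_bij)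
    (cw m (addNbrEdges G v))
  rw [← hsum]
  simp only [Equiv.ofBijective_apply]
  set D := G.connectedComponentMk v with hD
  have key : ∀ c : G.ConnectedComponent,
      cw m (addNbrEdges G v) (thetaV G v c)
        = cw m G c + (if c = D then
            (min ((m : ℤ) - (clqNum ((addNbrEdges G v).induce (thetaV G v D).supp) : ℤ) - 1) (-1)
             - min ((m : ℤ) - (clqNum (G.induce D.supp) : ℤ) - 1) (-1)) else 0) := by
    intro c
    by_cases hc : c = D
    · subst hc
      rw [if_pos rfl]
      unfold cw
      rw [supp_thetaV]
      ring
    · rw [if_neg hc, add_zero]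
      exact cw_thetaV_eq m c hc
  rw [Finset.sum_congr rfl (fun c _ => key c), Finset.sum_add_distrib,
    Finset.sum_ite_eq' Finset.univ D]
  simp only [Finset.mem_univ, if_pos]

end addnbr

section internal
variable {V : Type*} [Finite V] {G : SimpleGraph V}

lemma exists_maxclq_superset (G : SimpleGraph V) {s : Set V} (hs : G.IsClique s) :
    ∃ t : Set V, MaxClq G t ∧ s ⊆ t := by
  obtain ⟨t, ⟨ht, hst⟩, hmax⟩ := Set.Finite.exists_maximalFor id
    {t : Set V | G.IsClique t ∧ s ⊆ t} (Set.toFinite _) ⟨s, hs, subset_rfl⟩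
  refine ⟨t, ⟨ht, ?_⟩, hst⟩
  intro t' ht' htt'
  exact le_antisymm htt' (hmax ⟨ht', hst.trans htt'⟩ htt')

lemma internal_of_cherry {v p q : V} (hp : G.Adj v p) (hq : G.Adj v q) (hpq : p ≠ q)
    (hnadj : ¬ G.Adj p q) : InternalVtx G v := by
  obtain ⟨t₁, ht₁, hsub₁⟩ := exists_maxclq_superset G (isClique_pair' hp)
  obtain ⟨t₂, ht₂, hsub₂⟩ := exists_maxclq_superset G (isClique_pair' hq)
  refine ⟨t₁, t₂, ht₁, ht₂, ?_, hsub₁ (by simp), hsub₂ (by simp)⟩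
  intro h
  have hpt : p ∈ t₂ := h ▸ hsub₁ (by simp)
  have hqt : q ∈ t₂ := hsub₂ (by simp)
  exact hnadj (ht₂.1 hpt hqt hpq)

end internal

section main
variable {V : Type*} [Finite V]

lemma cw_eq_zero_unmatched (m : ℕ) (hm : 2 ≤ m) (G : SimpleGraph V) (d : G.ConnectedComponent)
    (hd : ∀ c : (G.induce {u : V | ∃ w : V, G.Adj u w}).ConnectedComponent,
      cmap G {u : V | ∃ w : V, G.Adj u w} c ≠ d) :
    cw m G d = 0 := by
  set U : Set V := {u : V | ∃ w : V, G.Adj u w} with hU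
  revert hd
  induction d using SimpleGraph.ConnectedComponent.ind with | _ x =>
  intro hd
  have hx : x ∉ U := by
    intro hx
    exact hd ((G.induce U).connectedComponentMk ⟨x, hx⟩) (cmap_mk _)
  have hsupp : (G.connectedComponentMk x).supp = {x} := by
    ext y
    rw [ConnectedComponent.mem_supp_iff, ConnectedComponent.eq]
    constructor
    · intro hr
      by_contra hne
      obtain ⟨z, hz⟩ := exists_neighbor_of_reachable_ne hr.symm (fun h => hne h.symm)
      exact hx ⟨z, hz⟩
    · rintro rfl
      exact Reachable.refl _
  have hclq : clqNum (G.induce ({x} : Set V)) = 1 := by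
    apply le_antisymm
    · have := clqNum_le_card (G.induce ({x} : Set V))
      rwa [Nat.card_coe_set_eq, Set.ncard_singleton] at this
    · exact clqNum_one_pos (⟨x, rfl⟩ : ↥({x} : Set V))
  unfold cw
  rw [hsupp, hclq, Set.ncard_singleton]
  omega

theorem part_a (m : ℕ) (hm : 2 ≤ m) (G : SimpleGraph V) :
    (Nat.card {u : V | ∃ w : V, G.Adj u w} : ℤ)
        + gammaM m (G.induce {u : V | ∃ w : V, G.Adj u w})
      ≤ (Nat.card V : ℤ) + gammaM m G := by
  classical
  set U : Set V := {u : V | ∃ w : V, G.Adj u w} with hU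
  letI : Fintype V := Fintype.ofFinite V
  letI : Fintype G.ConnectedComponent := Fintype.ofFinite _
  letI : Fintype (G.induce U).ConnectedComponent := Fintype.ofFinite _
  have hUclosed : ∀ c : (G.induce U).ConnectedComponent, ∀ y ∈ (cmap G U c).supp, y ∈ U := by
    intro c
    induction c using SimpleGraph.ConnectedComponent.ind with | _ x =>
    intro y hy
    rw [cmap_mk, ConnectedComponent.mem_supp_iff, ConnectedComponent.eq] at hy
    by_cases hxy : y = ↑x
    · rw [hxy]; exact x.2
    · obtain ⟨z, hz⟩ := exists_neighbor_of_reachable_ne hy hxy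
      exact ⟨z, hz⟩
  have hcw : ∀ c, cw m G (cmap G U c) = cw m (G.induce U) c :=
    fun c => cw_cmap_eq c (supp_eq_image c (hUclosed c))
  have hinj : ∀ c₁ ∈ Finset.univ, ∀ c₂ ∈ (Finset.univ :
      Finset (G.induce U).ConnectedComponent), cmap G U c₁ = cmap G U c₂ → c₁ = c₂ :=
    fun c₁ _ c₂ _ h => cmap_inj (hUclosed c₁) h
  rw [psi_eq, psi_eq, finsum_eq_sum_of_fintype, finsum_eq_sum_of_fintype]
  calc ∑ c : (G.induce U).ConnectedComponent, cw m (G.induce U) c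
      = ∑ c : (G.induce U).ConnectedComponent, cw m G (cmap G U c) :=
        Finset.sum_congr rfl (fun c _ => (hcw c).symm)
    _ = ∑ d ∈ Finset.univ.image (cmap G U), cw m G d := (Finset.sum_image hinj).symm
    _ ≤ ∑ d : G.ConnectedComponent, cw m G d := by
        refine Finset.sum_le_sum_of_subset_of_nonneg (Finset.subset_univ _) ?_
        intro d _ hd
        refine le_of_eq (cw_eq_zero_unmatched m hm G d ?_).symm
        intro c hc
        exact hd (Finset.mem_image.2 ⟨c, Finset.mem_univ c, hc⟩)

theorem part_b (m : ℕ) (hm : 2 ≤ m) (G : SimpleGraph V)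
    (h1 : ∀ u w : V, G.Reachable u w → u ≠ w → G.Adj u w) :
    ∑ᶠ c : G.ConnectedComponent, min ((m : ℤ) - 1) ((c.supp.ncard : ℤ) - 1)
      ≤ (Nat.card V : ℤ) + gammaM m G := by
  rw [psi_eq]
  apply le_of_eq
  apply finsum_congr
  intro c
  have hω : clqNum (G.induce c.supp) = c.supp.ncard := by
    apply le_antisymm
    · have := clqNum_le_card (G.induce c.supp)
      rwa [Nat.card_coe_set_eq] at this
    · have hK : (G.induce c.supp).IsClique Set.univ := by
        intro a _ b _ hne
        have ha : G.connectedComponentMk ↑a = c := (ConnectedComponent.mem_supp_iff _ _).1 a.2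
        have hb : G.connectedComponentMk ↑b = c := (ConnectedComponent.mem_supp_iff _ _).1 b.2
        have hr : G.Reachable ↑a ↑b := ConnectedComponent.eq.1 (ha.trans hb.symm)
        exact h1 _ _ hr (fun h => hne (Subtype.ext h))
      have := le_clqNum hK
      rwa [Set.ncard_univ, Nat.card_coe_set_eq] at this
  unfold cw
  rw [hω]
  omega

theorem part_c (m : ℕ) (hm : 2 ≤ m) (G : SimpleGraph V)
    (h : ∃ u w : V, u ≠ w ∧ G.Reachable u w ∧ ¬ G.Adj u w) :
    ∃ v : V, InternalVtx G v ∧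
      (((Nat.card {u : V | u ≠ v} : ℤ) + gammaM m (G.induce {u : V | u ≠ v})
          ≤ (Nat.card V : ℤ) + gammaM m G ∧
        (Nat.card V : ℤ) + gammaM m (addNbrEdges G v) < (Nat.card V : ℤ) + gammaM m G) ∨
       ((Nat.card {u : V | u ≠ v} : ℤ) + gammaM m (G.induce {u : V | u ≠ v})
          ≤ (Nat.card V : ℤ) + gammaM m G ∧
        (Nat.card V : ℤ) + gammaM m (addNbrEdges G v) = (Nat.card V : ℤ) + gammaM m G ∧
        (Nat.card {u : V | u ≠ v} : ℤ)
          + gammaM m ((addNbrEdges G v).induce {u : V | u ≠ v})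
          < (Nat.card V : ℤ) + gammaM m G)) := by
  obtain ⟨u, w, hne, hreach, hnadj⟩ := h
  obtain ⟨wk⟩ := hreach
  obtain ⟨v, p, q, hp, hq, hpq, hnpq⟩ := exists_cherry wk hne hnadj
  refine ⟨v, internal_of_cherry hp hq hpq hnpq, ?_⟩
  set D := G.connectedComponentMk v with hD
  have hpv : (addNbrEdges G v).Adj v p := Or.inl hp
  have hdel := psi_delete_le m G hp
  have hpsi := psi_addNbr m G v
  set fv : ℤ := min ((m : ℤ) - (clqNum ((addNbrEdges G v).induce (thetaV G v D).supp) : ℤ) - 1) (-1) with hfv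
  set fD : ℤ := min ((m : ℤ) - (clqNum (G.induce D.supp) : ℤ) - 1) (-1) with hfD
  have hfle : fv ≤ fD := by
    have hmono : clqNum (G.induce D.supp) ≤ clqNum ((addNbrEdges G v).induce (thetaV G v D).supp) := by
      rw [supp_thetaV]
      exact clqNum_mono (fun a b hab => Or.inl hab)
    omega
  have hDv : (addNbrEdges G v).connectedComponentMk v = thetaV G v D := (thetaV_mk v).symm
  rcases lt_or_eq_of_le hfle with hlt | heq
  · -- strict decrease for G_v
    left
    exact ⟨hdel, by omega⟩
  · -- equality case
    right
    refine ⟨hdel, by omega, ?_⟩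
    -- apply psi_delete_lt to Gv at v
    have hcase : min ((m : ℤ) - (clqNum ((addNbrEdges G v).induce ((addNbrEdges G v).connectedComponentMk v).supp) : ℤ) - 1) (-1) = -1
        ∨ ∃ K : Set V, (addNbrEdges G v).IsClique K ∧ K ⊆ ((addNbrEdges G v).connectedComponentMk v).supp ∧ v ∉ K ∧
            clqNum ((addNbrEdges G v).induce ((addNbrEdges G v).connectedComponentMk v).supp) ≤ K.ncard := by
      rw [hDv]
      by_cases hfv1 : fv = -1
      · left; omega
      · right
        -- clique numbers are equal
        have hωeq : clqNum ((addNbrEdges G v).induce (thetaV G v D).supp) = clqNum (G.induce D.supp) := by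
          omega
        obtain ⟨Kt, hKt, hKtcard⟩ := exists_clqNum (G.induce D.supp)
        set K₀ : Set V := Subtype.val '' Kt with hK₀
        have hK₀clq : G.IsClique K₀ := (isClique_induce_iff).1 hKt
        have hK₀D : K₀ ⊆ D.supp := by
          rintro x ⟨⟨y, hy⟩, -, rfl⟩; exact hy
        have hK₀card : K₀.ncard = clqNum (G.induce D.supp) := by
          rw [hK₀, Set.ncard_image_of_injective _ Subtype.val_injective, hKtcard]
        have hωpos : 1 ≤ clqNum (G.induce D.supp) := clqNum_component_pos G v
        -- a neighbour of v outside K₀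
        have hr : ∃ r : V, G.Adj v r ∧ r ∉ K₀ := by
          by_cases hpK : p ∈ K₀
          · refine ⟨q, hq, fun hqK => ?_⟩
            exact hnpq (hK₀clq hpK hqK hpq)
          · exact ⟨p, hp, hpK⟩
        obtain ⟨r, hvr, hrK⟩ := hr
        have hrD : r ∈ D.supp :=
          (ConnectedComponent.mem_supp_iff _ _).2 (ConnectedComponent.sound hvr.symm.reachable)
        by_cases hvK : v ∈ K₀
        · -- swap v for r
          refine ⟨insert r (K₀ \ {v}), ?_, ?_, ?_, ?_⟩
          · rintro a (rfl | ⟨haK, hav⟩) b hb hne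
            · rcases hb with rfl | ⟨hbK, hbv⟩
              · exact absurd rfl hne
              · have hvb : G.Adj v b := hK₀clq hvK hbK (fun hh => hbv hh.symm)
                exact Or.inr ⟨hne, hvr, hvb⟩
            · rcases hb with rfl | ⟨hbK, hbv⟩
              · have hva : G.Adj v a := hK₀clq hvK haK (fun hh => (hav : a ∉ ({v} : Set V)) hh.symm)
                exact Or.inr ⟨hne, hva, hvr⟩
              · exact Or.inl (hK₀clq haK hbK hne)
          · rw [supp_thetaV]
            rintro x (rfl | ⟨hxK, -⟩)
            · exact hrD
            · exact hK₀D hxK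
          · rintro (rfl | ⟨-, hv2⟩)
            · exact hrK hvK
            · exact hv2 rfl
          · have h1 : (insert r (K₀ \ {v})).ncard = (K₀ \ {v}).ncard + 1 :=
              Set.ncard_insert_of_notMem (fun hh => hrK hh.1)
            have h2 : (K₀ \ {v}).ncard = K₀.ncard - 1 := Set.ncard_diff_singleton_of_mem hvK
            rw [hωeq]
            omega
        · -- K₀ itself avoids v
          refine ⟨K₀, hK₀clq.mono (le_addNbr G v), ?_, hvK, ?_⟩
          · rw [supp_thetaV]; exact hK₀D
          · rw [hωeq]; omega
    have hlt2 := psi_delete_lt m (addNbrEdges G v) hpv hcase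
    omega

end main


/-- for every integer `m ≥ 2`, the (integer-valued) map
`G ↦ n(G) + γ_m(G)` is `(reg, m)`-compatible. -/
theorem stmt9 (m : ℕ) (hm : 2 ≤ m) :
    RegCompatibleZ m (fun V _ G => (Nat.card V : ℤ) + gammaM m G) := by
  refine ⟨?_, ?_, ?_⟩
  · intro V _ G
    exact part_a m hm G
  · intro V _ G h1 _
    exact part_b m hm G h1
  · intro V _ G h
    exact part_c m hm G h
end
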